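/- arXiv:0909.0809 — 2 statements merged into one kernel-verified Lean document; each statement's English description precedes it below -/
import Mathlib

section
/- Let $q=2^r$. For each odd integer $n\geq 3$ and all $q$, one has $n(\beta)>0$ for every $\beta\in\mathbb{F}_q$. For $n=1$ and all $q$, one has $n(\beta)=q$ if $\beta=1$, $n(\beta)=2q$ if $\beta\neq 1$ and $tr((\beta-1)^{-1})=0$, and $n(\beta)=0$ if $\beta\neq 1$ and $tr((\beta-1)^{-1})=1$. -/
open scoped BigOperators Classical
open Matrix

noncomputable section

/-- The finite field `F_q` with `q = 2^r` elements. -/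
abbrev Fq (r : ℕ) : Type := GaloisField 2 r

noncomputable instance (r : ℕ) : Fintype (Fq r) := Fintype.ofFinite _

/-- The trace map `tr : F_q → F_2`. -/
noncomputable def tr2 (r : ℕ) (x : Fq r) : ZMod 2 := Algebra.trace (ZMod 2) (Fq r) x

/-- Index type for `(2n+1) × (2n+1)` matrices, split into blocks `n + (n + 1)`. -/
abbrev Idx (n : ℕ) := Fin n ⊕ (Fin n ⊕ Unit)

/-- The quadratic form `θ(x) = ∑_{i=1}^n x_i x_{n+i} + x_{2n+1}²`. -/
def theta (r n : ℕ) (x : Idx n → Fq r) : Fq r :=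
  (∑ i : Fin n, x (Sum.inl i) * x (Sum.inr (Sum.inl i))) + x (Sum.inr (Sum.inr ())) ^ 2

/-- Assemble a `(2n+1) × (2n+1)` matrix `[[A, B, e],[C, D, f],[g, h, c]]` from blocks. -/
def blk {α : Type} {n : ℕ} (A B C D : Matrix (Fin n) (Fin n) α)
    (g h e f : Fin n → α) (c : α) : Matrix (Idx n) (Idx n) α :=
  Matrix.of fun i j =>
    match i, j with
    | Sum.inl i, Sum.inl j => A i j
    | Sum.inl i, Sum.inr (Sum.inl j) => B i j
    | Sum.inl i, Sum.inr (Sum.inr _) => e i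
    | Sum.inr (Sum.inl i), Sum.inl j => C i j
    | Sum.inr (Sum.inl i), Sum.inr (Sum.inl j) => D i j
    | Sum.inr (Sum.inl i), Sum.inr (Sum.inr _) => f i
    | Sum.inr (Sum.inr _), Sum.inl j => g j
    | Sum.inr (Sum.inr _), Sum.inr (Sum.inl j) => h j
    | Sum.inr (Sum.inr _), Sum.inr (Sum.inr _) => c

/-- A square matrix is alternating: symmetric with zero diagonal (characteristic 2). -/
def IsAlt {n : ℕ} {α : Type} [Zero α] (M : Matrix (Fin n) (Fin n) α) : Prop :=
  Mᵀ = M ∧ ∀ i, M i i = 0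

/-- The orthogonal group `O(2n+1, q)`: isometries of the quadratic form `θ`. -/
def OGrp (r n : ℕ) : Set (Matrix (Idx n) (Idx n) (Fq r)) :=
  {w | IsUnit w ∧ ∀ x, theta r n (w.mulVec x) = theta r n x}

/-- The maximal parabolic subgroup `P(2n+1, q)`: all products
`[[A,0,0],[0,ᵗA⁻¹,0],[0,0,1]] * [[1,B,0],[0,1,0],[0,h,1]]` with `A ∈ GL(n,q)` and
`B + ᵗh h` alternating. -/
def Pgrp (r n : ℕ) : Set (Matrix (Idx n) (Idx n) (Fq r)) :=
  {w | ∃ A B h, IsUnit A ∧ IsAlt (B + Matrix.of (fun i j => h i * h j)) ∧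
    w = blk A 0 0 ((A⁻¹)ᵀ) 0 0 0 0 1 * blk 1 B 0 1 0 h 0 0 1}

/-- The matrix `σ_k ∈ O(2n+1, q)` interchanging the first `k` coordinates with
coordinates `n+1, …, n+k`. -/
def sigmaMat (r n k : ℕ) : Matrix (Idx n) (Idx n) (Fq r) :=
  blk (Matrix.of fun i j => if i = j ∧ k ≤ (i : ℕ) then 1 else 0)
      (Matrix.of fun i j => if i = j ∧ (i : ℕ) < k then 1 else 0)
      (Matrix.of fun i j => if i = j ∧ (i : ℕ) < k then 1 else 0)
      (Matrix.of fun i j => if i = j ∧ k ≤ (i : ℕ) then 1 else 0)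
      0 0 0 0 1

/-- The double coset `P σ_k P`. -/
def DCoset (r n k : ℕ) : Set (Matrix (Idx n) (Idx n) (Fq r)) :=
  {w | ∃ p ∈ Pgrp r n, ∃ p' ∈ Pgrp r n, w = p * sigmaMat r n k * p'}

/-- The double coset `P σ_k P` as a finite set. -/
noncomputable def PsPfin (r n k : ℕ) : Finset (Matrix (Idx n) (Idx n) (Fq r)) :=
  (Set.toFinite (DCoset r n k)).toFinset

/-- `DC(n, q) = P σ_{n-1} P`. -/
noncomputable def DCfin (r n : ℕ) : Finset (Matrix (Idx n) (Idx n) (Fq r)) :=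
  PsPfin r n (n - 1)

/-- `n(β)`: the number of `w ∈ DC(n,q)` with matrix trace `β`. -/
noncomputable def nBeta (r n : ℕ) (β : Fq r) : ℕ :=
  ((DCfin r n).filter (fun w => Matrix.trace w = β)).card

section Aux

variable (r : ℕ)

example : CharP (Fq r) 2 := inferInstance
example : FiniteDimensional (ZMod 2) (Fq r) := inferInstance
example : IsGalois (ZMod 2) (Fq r) := inferInstance

-- frobenius as AlgEquiv
def frobAlg : Fq r ≃ₐ[ZMod 2] Fq r := by
  refine AlgEquiv.ofBijective ⟨frobenius (Fq r) 2, ?_⟩ ?_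
  · intro c
    show (algebraMap (ZMod 2) (Fq r) c) ^ 2 = algebraMap (ZMod 2) (Fq r) c
    rw [← map_pow]
    congr 1
    revert c; decide
  · exact Finite.injective_iff_bijective.mp (frobenius_inj (Fq r) 2)

lemma tr2_sq (x : Fq r) : tr2 r (x ^ 2) = tr2 r x := by
  have h1 := trace_eq_sum_automorphisms (K := ZMod 2) (x := x)
  have h2 := trace_eq_sum_automorphisms (K := ZMod 2) (x := (frobAlg r x))
  have key : ∑ σ : Fq r ≃ₐ[ZMod 2] Fq r, σ (frobAlg r x) = ∑ σ : Fq r ≃ₐ[ZMod 2] Fq r, σ x := by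
    rw [← Equiv.sum_comp (Equiv.mulRight (frobAlg r)) (fun σ => σ x)]
    rfl
  have hx : frobAlg r x = x ^ 2 := rfl
  have := h2.trans (key.trans h1.symm)
  rw [hx] at this
  exact (FaithfulSMul.algebraMap_injective (ZMod 2) (Fq r)) this

def asHom : Fq r →+ Fq r where
  toFun y := y ^ 2 + y
  map_zero' := by simp
  map_add' x y := by
    have : (x + y) ^ 2 = x ^ 2 + y ^ 2 := CharTwo.add_sq x y
    show (x + y) ^ 2 + (x + y) = (x ^ 2 + x) + (y ^ 2 + y)
    rw [this]; ring

def trHom : Fq r →+ ZMod 2 := (Algebra.trace (ZMod 2) (Fq r)).toAddMonoidHom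

lemma tr2_surj (hr : 1 ≤ r) : Function.Surjective (tr2 r) := by
  have hne : Algebra.trace (ZMod 2) (Fq r) ≠ 0 := Algebra.trace_ne_zero (ZMod 2) (Fq r)
  obtain ⟨x, hx⟩ : ∃ x, tr2 r x ≠ 0 := by
    by_contra h
    push_neg at h
    exact hne (LinearMap.ext fun y => h y)
  intro c
  fin_cases c
  · exact ⟨0, by simp [tr2]; rfl⟩
  · refine ⟨x, ?_⟩
    have : ∀ c : ZMod 2, c ≠ 0 → c = 1 := by decide
    show tr2 r x = _
    rw [this _ hx]; rfl

lemma card_Fq (hr : 1 ≤ r) : Nat.card (Fq r) = 2 ^ r :=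
  GaloisField.card 2 r (by omega)

lemma artin_schreier (hr : 1 ≤ r) (d : Fq r) :
    (∃ y : Fq r, y ^ 2 + y = d) ↔ tr2 r d = 0 := by
  have hker : ((asHom r).ker : Set (Fq r)) = {0, 1} := by
    ext y
    simp only [AddMonoidHom.mem_ker, Set.mem_insert_iff, Set.mem_singleton_iff]
    constructor
    · intro h
      have : y * (y + 1) = 0 := by
        have : y ^ 2 + y = 0 := h
        ring_nf
        linear_combination this
      rcases mul_eq_zero.mp this with h' | h'
      · exact Or.inl h'
      · right
        have := CharTwo.add_eq_iff_eq_add.mp h'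
        simpa using this
    · rintro (rfl | rfl)
      · show (0:Fq r) ^ 2 + 0 = 0; simp
      · show (1:Fq r) ^ 2 + 1 = 0; rw [one_pow]; exact CharTwo.add_self_eq_zero 1
  have hcardker : Nat.card (asHom r).ker = 2 := by
    have : Nat.card (asHom r).ker = ({0, 1} : Set (Fq r)).ncard := by
      rw [← Nat.card_coe_set_eq, ← hker]; rfl
    rw [this, Set.ncard_pair (one_ne_zero (α := Fq r)).symm]
  have hrange_le : (asHom r).range ≤ (trHom r).ker := by
    rintro x ⟨y, rfl⟩
    show tr2 r (y ^ 2 + y) = 0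
    have : tr2 r (y ^ 2 + y) = tr2 r (y ^ 2) + tr2 r y := map_add (trHom r) _ _
    rw [this, tr2_sq, CharTwo.add_self_eq_zero]
  have h1 : Nat.card (Fq r) = Nat.card ((Fq r) ⧸ (asHom r).ker) * Nat.card (asHom r).ker :=
    AddSubgroup.card_eq_card_quotient_mul_card_addSubgroup _
  have h2 : Nat.card ((Fq r) ⧸ (asHom r).ker) = Nat.card (asHom r).range :=
    Nat.card_congr (QuotientAddGroup.quotientKerEquivRange (asHom r)).toEquiv
  have h3 : Nat.card (Fq r) = Nat.card ((Fq r) ⧸ (trHom r).ker) * Nat.card (trHom r).ker :=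
    AddSubgroup.card_eq_card_quotient_mul_card_addSubgroup _
  have h4 : Nat.card ((Fq r) ⧸ (trHom r).ker) = Nat.card (trHom r).range :=
    Nat.card_congr (QuotientAddGroup.quotientKerEquivRange (trHom r)).toEquiv
  have h5 : (trHom r).range = ⊤ := by
    rw [AddMonoidHom.range_eq_top]
    exact tr2_surj r hr
  have h6 : Nat.card (trHom r).range = 2 := by
    rw [h5]
    simpa using (Nat.card_eq_of_bijective _ (AddSubgroup.topEquiv (G := ZMod 2)).bijective)
  have hcards : Nat.card (asHom r).range = Nat.card (trHom r).ker := by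
    have e1 : Nat.card (asHom r).range * 2 = 2 ^ r := by
      rw [← h2, ← card_Fq r hr, h1, hcardker]
    have e2 : 2 * Nat.card (trHom r).ker = 2 ^ r := by
      rw [← card_Fq r hr, h3, h4, h6]
    omega
  have heq : (asHom r).range = (trHom r).ker :=
    AddSubgroup.eq_of_le_of_card_ge hrange_le (le_of_eq hcards.symm)
  constructor
  · rintro ⟨y, rfl⟩
    exact hrange_le ⟨y, rfl⟩
  · intro h
    have : d ∈ (asHom r).range := heq ▸ (AddMonoidHom.mem_ker.mpr h)
    obtain ⟨y, hy⟩ := this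
    exact ⟨y, hy⟩

lemma card_roots (hr : 1 ≤ r) (β : Fq r) :
    (Finset.univ.filter (fun a : Fq r => a ≠ 0 ∧ a + a⁻¹ + 1 = β)).card =
      if β = 1 then 1 else if tr2 r (β - 1)⁻¹ = 0 then 2 else 0 := by
  have h2 : (2 : Fq r) = 0 := CharTwo.two_eq_zero
  have hcond : ∀ a : Fq r, (a ≠ 0 ∧ a + a⁻¹ + 1 = β) ↔ (a * a + (β + 1) * a + 1 = 0) := by
    intro a
    constructor
    · rintro ⟨ha, hb⟩
      have hinv : a * a⁻¹ = 1 := mul_inv_cancel₀ ha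
      linear_combination (-a) * hb + hinv + (a^2+a+1) * h2
    · intro h
      have ha : a ≠ 0 := by
        rintro rfl
        simp at h
      refine ⟨ha, ?_⟩
      have hinv : a * a⁻¹ = 1 := mul_inv_cancel₀ ha
      have := mul_left_cancel₀ ha (show a * (a + a⁻¹ + 1) = a * β by
        linear_combination h + hinv + (-(a*β)) * h2)
      exact this
  simp only [hcond]
  by_cases hβ : β = 1
  · subst hβ
    rw [if_pos rfl]
    have : (Finset.univ.filter (fun a : Fq r => a * a + (1 + 1) * a + 1 = 0)) = {1} := by
      ext a
      simp only [Finset.mem_filter, Finset.mem_univ, true_and, Finset.mem_singleton]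
      constructor
      · intro h
        have : (a + 1) * (a + 1) = 0 := by linear_combination h
        have := mul_self_eq_zero.mp this
        linear_combination this - h2
      · rintro rfl
        linear_combination (2:Fq r) * h2
    rw [this, Finset.card_singleton]
  · rw [if_neg hβ]
    set c : Fq r := β + 1 with hc
    have hcne : c ≠ 0 := by
      intro h
      apply hβ
      have : β = -1 := by linear_combination h
      rw [this]; linear_combination -h2
    have hβ1 : β - 1 = c := by rw [hc]; linear_combination -h2
    rw [hβ1]
    have hcc : c * c⁻¹ = 1 := mul_inv_cancel₀ hcne
    by_cases htr : tr2 r c⁻¹ = 0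
    · rw [if_pos htr]
      obtain ⟨y, hy⟩ := (artin_schreier r hr c⁻¹).mpr htr
      set a₁ : Fq r := 1 + c * y with ha₁
      have root1 : a₁ * a₁ + c * a₁ + 1 = 0 := by
        rw [ha₁]
        linear_combination (c^2) * hy + c * hcc + (c*y + c + 1) * h2
      have root2 : (a₁ + c) * (a₁ + c) + c * (a₁ + c) + 1 = 0 := by
        linear_combination root1 + (a₁*c + c^2) * h2
      have hne : a₁ ≠ a₁ + c := by
        intro h
        exact hcne (by linear_combination -h)
      have : (Finset.univ.filter (fun a : Fq r => a * a + c * a + 1 = 0)) = {a₁, a₁ + c} := by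
        ext a
        simp only [Finset.mem_filter, Finset.mem_univ, true_and, Finset.mem_insert,
          Finset.mem_singleton]
        constructor
        · intro h
          have hfac : (a + a₁) * (a + a₁ + c) = 0 := by
            linear_combination h + root1 + (a*a₁ - 1) * h2
          rcases mul_eq_zero.mp hfac with h' | h'
          · left; linear_combination h' + (-a₁) * h2
          · right; linear_combination h' + (-a₁ - c) * h2
        · rintro (rfl | rfl)
          · exact root1
          · exact root2
      rw [this, Finset.card_insert_of_notMem (by simpa using hne), Finset.card_singleton]
    · rw [if_neg htr]
      have : (Finset.univ.filter (fun a : Fq r => a * a + c * a + 1 = 0)) = ∅ := by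
        ext a
        simp only [Finset.mem_filter, Finset.mem_univ, true_and, Finset.notMem_empty,
          iff_false]
        intro h
        apply htr
        apply (artin_schreier r hr c⁻¹).mp
        refine ⟨(a + 1) * c⁻¹, ?_⟩
        linear_combination c⁻¹^2 * h + (-(a*c⁻¹)) * hcc + (a * c⁻¹^2) * h2
      rw [this, Finset.card_empty]


end Aux

section Aux2

variable (r : ℕ)
variable {n : ℕ}

lemma blk_mul (A B C D : Matrix (Fin n) (Fin n) (Fq r)) (g h e f : Fin n → Fq r) (c : Fq r)
    (A' B' C' D' : Matrix (Fin n) (Fin n) (Fq r)) (g' h' e' f' : Fin n → Fq r) (c' : Fq r) :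
    blk A B C D g h e f c * blk A' B' C' D' g' h' e' f' c' =
      blk (A * A' + B * C' + Matrix.of fun i j => e i * g' j)
          (A * B' + B * D' + Matrix.of fun i j => e i * h' j)
          (C * A' + D * C' + Matrix.of fun i j => f i * g' j)
          (C * B' + D * D' + Matrix.of fun i j => f i * h' j)
          (g ᵥ* A' + h ᵥ* C' + c • g')
          (g ᵥ* B' + h ᵥ* D' + c • h')
          (A *ᵥ e' + B *ᵥ f' + c' • e)
          (C *ᵥ e' + D *ᵥ f' + c' • f)
          (g ⬝ᵥ e' + h ⬝ᵥ f' + c * c') := by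
  ext i j
  rcases i with i | i | i <;> rcases j with j | j | j <;>
    simp [blk, Matrix.mul_apply, Fintype.sum_sum_type, Matrix.vecMul, Matrix.mulVec,
      dotProduct, mul_comm] <;> ring

lemma trace_blk (A B C D : Matrix (Fin n) (Fin n) (Fq r)) (g h e f : Fin n → Fq r) (c : Fq r) :
    Matrix.trace (blk A B C D g h e f c) = Matrix.trace A + Matrix.trace D + c := by
  simp [Matrix.trace, Fintype.sum_sum_type, blk, Matrix.diag, add_assoc]

lemma blk_one : (blk 1 0 0 1 0 0 0 0 1 : Matrix (Idx n) (Idx n) (Fq r)) = 1 := by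
  ext i j
  rcases i with i | i | i <;> rcases j with j | j | j <;>
    simp [blk, Matrix.one_apply, Sum.inl.injEq, Sum.inr.injEq]

lemma sq_surj : Function.Surjective (fun x : Fq r => x * x) := by
  have hinj : Function.Injective (fun x : Fq r => x * x) := by
    intro x y hxy
    have : (x + y) * (x + y) = 0 := by
      rw [CharTwo.add_mul_self]
      simp only at hxy
      rw [hxy, CharTwo.add_self_eq_zero]
    have hxy0 : x + y = 0 := by
      exact mul_self_eq_zero.mp this
    linear_combination hxy0 - y * (CharTwo.two_eq_zero (R := Fq r))
  exact Finite.surjective_of_injective hinj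

lemma sigma_blk (k : ℕ) :
    sigmaMat r n k = blk (Matrix.diagonal fun i : Fin n => if k ≤ (i : ℕ) then 1 else 0)
      (Matrix.diagonal fun i : Fin n => if (i : ℕ) < k then 1 else 0)
      (Matrix.diagonal fun i : Fin n => if (i : ℕ) < k then 1 else 0)
      (Matrix.diagonal fun i : Fin n => if k ≤ (i : ℕ) then 1 else 0) 0 0 0 0 1 := by
  unfold sigmaMat
  have key : ∀ (P : Fin n → Prop) (_ : DecidablePred P),
      (Matrix.of fun i j : Fin n => if i = j ∧ P i then (1 : Fq r) else 0) =
      Matrix.diagonal (fun i => if P i then 1 else 0) := by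
    intro P hP
    ext i j
    by_cases hij : i = j <;> simp [Matrix.diagonal, hij]
  rw [key (fun i => k ≤ (i : ℕ)) _, key (fun i => (i : ℕ) < k) _]

lemma one_blk_P : (blk 1 0 0 ((1 : Matrix (Fin n) (Fin n) (Fq r))⁻¹)ᵀ 0 0 0 0 1) =
    (1 : Matrix (Idx n) (Idx n) (Fq r)) := by
  rw [inv_one, transpose_one, blk_one]

lemma one_mem_Pgrp : (1 : Matrix (Idx n) (Idx n) (Fq r)) ∈ Pgrp r n := by
  refine ⟨1, 0, 0, isUnit_one, ?_, ?_⟩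
  · constructor
    · ext i j
      simp [Matrix.transpose_apply]
    · intro i; simp
  · rw [one_blk_P]
    rw [show (blk 1 0 0 1 0 (0 : Fin n → Fq r) 0 0 1) = 1 from blk_one r, mul_one]

lemma exists_trace_DC (hn : 3 ≤ n) (β : Fq r) :
    ∃ w ∈ DCoset r n (n - 1), Matrix.trace w = β := by
  obtain ⟨s, hs⟩ := sq_surj r (β + 1)
  simp only at hs
  have hn0 : 0 < n := by omega
  set h : Fin n → Fq r := fun i => if (i : ℕ) = 0 then s else 0 with hh
  set B : Matrix (Fin n) (Fin n) (Fq r) := Matrix.of fun i j => h i * h j with hB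
  have hp'mem : blk 1 B 0 1 0 h 0 0 1 ∈ Pgrp r n := by
    refine ⟨1, B, h, isUnit_one, ?_, ?_⟩
    · have hzero : B + Matrix.of (fun i j => h i * h j) = 0 := by
        ext i j
        show h i * h j + h i * h j = 0
        exact CharTwo.add_self_eq_zero _
      rw [hzero]
      exact ⟨Matrix.transpose_zero, fun i => rfl⟩
    · rw [one_blk_P, one_mul]
  refine ⟨sigmaMat r n (n - 1) * blk 1 B 0 1 0 h 0 0 1,
    ⟨1, one_mem_Pgrp r, blk 1 B 0 1 0 h 0 0 1, hp'mem, by rw [one_mul]⟩, ?_⟩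
  rw [sigma_blk, blk_mul, trace_blk]
  set E : Matrix (Fin n) (Fin n) (Fq r) := Matrix.diagonal fun i : Fin n => if n - 1 ≤ (i : ℕ) then 1 else 0 with hE
  set F : Matrix (Fin n) (Fin n) (Fq r) := Matrix.diagonal fun i : Fin n => if (i : ℕ) < n - 1 then 1 else 0 with hF
  have htrFB : Matrix.trace (F * B) = s * s := by
    rw [Matrix.trace]
    have : ∀ i : Fin n, (F * B).diag i = if (i : ℕ) = 0 then s * s else 0 := by
      intro i
      rw [Matrix.diag_apply, hF, Matrix.diagonal_mul]
      by_cases hi : (i : ℕ) = 0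
      · simp [hi, hB, hh, show (0 : ℕ) < n - 1 by omega]
      · by_cases hi2 : (i : ℕ) < n - 1 <;> simp [hi, hi2, hB, hh]
    rw [Finset.sum_congr rfl fun i _ => this i]
    rw [Finset.sum_eq_single (⟨0, hn0⟩ : Fin n)]
    · simp
    · intro b _ hb
      rw [if_neg]
      simpa [Fin.ext_iff] using hb
    · intro habs
      exact absurd (Finset.mem_univ _) habs
  have h0 : (Matrix.of fun (_ _ : Fin n) => (0 : Fq r)) = 0 := rfl
  simp only [Pi.zero_apply, zero_mul, mul_zero, h0, Matrix.mul_one, Matrix.mul_zero,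
    Matrix.zero_mul, add_zero, zero_add, Matrix.trace_add, Matrix.trace_zero, mul_one,
    dotProduct_zero, zero_dotProduct]
  rw [htrFB, hs]
  linear_combination (Matrix.trace E + 1) * (CharTwo.two_eq_zero (R := Fq r))

lemma part1 (hn : 3 ≤ n) (β : Fq r) : 0 < nBeta r n β := by
  obtain ⟨w, hw, htr⟩ := exists_trace_DC r hn β
  apply Finset.card_pos.mpr
  refine ⟨w, Finset.mem_filter.mpr ⟨?_, htr⟩⟩
  exact (Set.Finite.mem_toFinset _).mpr hw

-- n = 1 material
def Mel (a h : Fq r) : Matrix (Idx 1) (Idx 1) (Fq r) :=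
  blk (Matrix.of fun _ _ => a) (Matrix.of fun _ _ => a * (h * h)) 0
    (Matrix.of fun _ _ => a⁻¹) 0 (fun _ => h) 0 0 1

lemma of_const_inv {a : Fq r} (ha : a ≠ 0) :
    (Matrix.of fun _ _ : Fin 1 => a)⁻¹ = Matrix.of fun _ _ => a⁻¹ := by
  apply Matrix.inv_eq_right_inv
  ext i j
  rw [Subsingleton.elim i 0, Subsingleton.elim j 0]
  simp [Matrix.mul_apply, Matrix.one_apply, mul_inv_cancel₀ ha]

lemma Pfactor (A D B : Matrix (Fin n) (Fin n) (Fq r)) (h : Fin n → Fq r) :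
    blk A 0 0 D 0 0 0 0 1 * blk 1 B 0 1 0 h 0 0 1 = blk A (A * B) 0 D 0 h 0 0 1 := by
  rw [blk_mul]
  have h0 : (Matrix.of fun (_ _ : Fin n) => (0 : Fq r)) = 0 := rfl
  congr 1 <;>
    simp [Matrix.mul_one, Matrix.mul_zero, Matrix.zero_mul, h0]

lemma mem_Pgrp_one (w : Matrix (Idx 1) (Idx 1) (Fq r)) :
    w ∈ Pgrp r 1 ↔ ∃ a h : Fq r, a ≠ 0 ∧ w = Mel r a h := by
  have h2 : (2 : Fq r) = 0 := CharTwo.two_eq_zero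
  constructor
  · rintro ⟨A, B, hv, hU, hAlt, rfl⟩
    set a := A 0 0 with ha
    set h0 := hv 0 with hh0
    have hane : a ≠ 0 := by
      intro h
      have := (Matrix.isUnit_iff_isUnit_det A).mp hU
      rw [Matrix.det_fin_one, ← ha, h] at this
      exact (not_isUnit_zero this)
    have hA : A = Matrix.of fun _ _ => a := by
      ext i j; rw [Subsingleton.elim i 0, Subsingleton.elim j 0]; rfl
    have hB : B = Matrix.of fun _ _ => h0 * h0 := by
      have := hAlt.2 0
      have hB00 : B 0 0 + h0 * h0 = 0 := this
      ext i j; rw [Subsingleton.elim i 0, Subsingleton.elim j 0]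
      show B 0 0 = h0 * h0
      linear_combination hB00 + (-(h0*h0)) * h2
    have hv' : hv = fun _ => h0 := by
      funext i; rw [Subsingleton.elim i 0]
    refine ⟨a, h0, hane, ?_⟩
    have hAB : (Matrix.of fun _ _ : Fin 1 => a) * (Matrix.of fun _ _ => h0 * h0) =
        Matrix.of fun _ _ => a * (h0 * h0) := by
      ext i j; rw [Subsingleton.elim i 0, Subsingleton.elim j 0]
      simp [Matrix.mul_apply]
    have hT : (Matrix.of fun _ _ : Fin 1 => a⁻¹)ᵀ = Matrix.of fun _ _ => a⁻¹ := by
      ext i j; rfl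
    rw [Pfactor, hA, hB, hv', of_const_inv r hane, hAB, hT, Mel]
  · rintro ⟨a, h, hane, rfl⟩
    refine ⟨Matrix.of fun _ _ => a, Matrix.of fun _ _ => h * h, fun _ => h, ?_, ?_, ?_⟩
    · rw [Matrix.isUnit_iff_isUnit_det, Matrix.det_fin_one]
      exact isUnit_iff_ne_zero.mpr hane
    · have hzero : (Matrix.of fun _ _ : Fin 1 => h * h) +
          Matrix.of (fun i j => (fun _ => h) i * (fun _ => h) j) = 0 := by
        ext i j
        show h * h + h * h = 0
        exact CharTwo.add_self_eq_zero _
      rw [hzero]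
      exact ⟨Matrix.transpose_zero, fun i => rfl⟩
    · have hAB : (Matrix.of fun _ _ : Fin 1 => a) * (Matrix.of fun _ _ => h * h) =
          Matrix.of fun _ _ => a * (h * h) := by
        ext i j; rw [Subsingleton.elim i 0, Subsingleton.elim j 0]
        simp [Matrix.mul_apply]
      have hT : (Matrix.of fun _ _ : Fin 1 => a⁻¹)ᵀ = Matrix.of fun _ _ => a⁻¹ := by
        ext i j; rfl
      rw [Pfactor, of_const_inv r hane, hAB, hT, Mel]

lemma Mel_mul (a a' h h' : Fq r) (ha' : a' ≠ 0) :
    Mel r a h * Mel r a' h' = Mel r (a * a') (h * a'⁻¹ + h') := by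
  have h2 : (2 : Fq r) = 0 := CharTwo.two_eq_zero
  have hcc : a' * a'⁻¹ = 1 := mul_inv_cancel₀ ha'
  ext i j
  rcases i with i | i | i <;> rcases j with j | j | j <;>
    · try rw [Subsingleton.elim i 0]
      try rw [Subsingleton.elim j 0]
      simp only [Mel, blk, Matrix.mul_apply, Fintype.sum_sum_type, Finset.univ_unique,
        Finset.sum_singleton, Matrix.of_apply, Matrix.zero_apply, Fin.default_eq_zero,
        Fin.isValue, Pi.zero_apply]
      first
      | rfl
      | (first
         | linear_combination (-(a*(h*h)*a'⁻¹)) * hcc + (-(a*a'*h*h'*a'⁻¹)) * h2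
         | linear_combination (-(a⁻¹*a'⁻¹)) * h2 + mul_inv_rev a a' ▸ (0:Fq r) = 0
         | ring
         | simp)

lemma trace_Mel (a h : Fq r) : Matrix.trace (Mel r a h) = a + a⁻¹ + 1 := by
  rw [Mel, trace_blk]
  congr 1
  · congr 1 <;> simp [Matrix.trace]
  
lemma Mel_one : Mel r 1 0 = 1 := by
  have c1 : (Matrix.of fun _ _ : Fin 1 => (1 : Fq r)) = 1 := by
    ext i j; rw [Subsingleton.elim i 0, Subsingleton.elim j 0]; simp [Matrix.one_apply]
  have c2 : (Matrix.of fun _ _ : Fin 1 => (1 : Fq r) * (0 * 0)) = 0 := by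
    ext i j; simp
  have c3 : (Matrix.of fun _ _ : Fin 1 => (1 : Fq r)⁻¹) = 1 := by
    rw [inv_one]; exact c1
  have c4 : (fun _ : Fin 1 => (0 : Fq r)) = 0 := rfl
  rw [Mel, c1, c2, c3, c4, blk_one]

lemma sigma_one : sigmaMat r 1 0 = 1 := by
  have e1 : (fun i : Fin 1 => if (0:ℕ) ≤ (i:ℕ) then (1:Fq r) else 0) = fun _ => 1 := by
    funext i; simp
  have e2 : (fun i : Fin 1 => if (i:ℕ) < 0 then (1:Fq r) else 0) = fun _ => 0 := by
    funext i; simp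
  rw [sigma_blk, e1, e2, Matrix.diagonal_one, Matrix.diagonal_zero, blk_one]

lemma DCoset_one : DCoset r 1 0 = Pgrp r 1 := by
  ext w
  constructor
  · rintro ⟨p, hp, p', hp', rfl⟩
    rw [sigma_one, mul_one]
    obtain ⟨a, h, ha, rfl⟩ := (mem_Pgrp_one r p).mp hp
    obtain ⟨a', h', ha', rfl⟩ := (mem_Pgrp_one r p').mp hp'
    rw [Mel_mul r a a' h h' ha']
    exact (mem_Pgrp_one r _).mpr ⟨a * a', h * a'⁻¹ + h', mul_ne_zero ha ha', rfl⟩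
  · intro hw
    refine ⟨w, hw, 1, ?_, by rw [sigma_one, mul_one, mul_one]⟩
    rw [← Mel_one r]
    exact (mem_Pgrp_one r _).mpr ⟨1, 0, one_ne_zero, rfl⟩

lemma Mel_inj : Function.Injective (fun p : Fq r × Fq r => Mel r p.1 p.2) := by
  rintro ⟨a, h⟩ ⟨a', h'⟩ hpq
  simp only at hpq
  have e1 := congrFun (congrFun hpq (Sum.inl 0)) (Sum.inl 0)
  have e2 := congrFun (congrFun hpq (Sum.inr (Sum.inr ()))) (Sum.inr (Sum.inl 0))
  simp only [Mel, blk, Matrix.of_apply] at e1 e2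
  exact Prod.ext e1 e2

lemma nBeta_one (hr : 1 ≤ r) (β : Fq r) :
    nBeta r 1 β = (if β = 1 then 1 else if tr2 r (β - 1)⁻¹ = 0 then 2 else 0) * 2 ^ r := by
  have hfil : (DCfin r 1).filter (fun w => Matrix.trace w = β) =
      Finset.image (fun p : Fq r × Fq r => Mel r p.1 p.2)
        ((Finset.univ.filter fun a : Fq r => a ≠ 0 ∧ a + a⁻¹ + 1 = β) ×ˢ Finset.univ) := by
    ext w
    simp only [Finset.mem_filter, Finset.mem_image, Finset.mem_product, Finset.mem_univ,
      true_and, and_true, DCfin, PsPfin, Set.Finite.mem_toFinset]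
    constructor
    · rintro ⟨hw, htr⟩
      rw [DCoset_one] at hw
      obtain ⟨a, h, ha, rfl⟩ := (mem_Pgrp_one r w).mp hw
      refine ⟨⟨a, h⟩, ⟨ha, ?_⟩, rfl⟩
      rw [trace_Mel] at htr
      exact htr
    · rintro ⟨⟨a, h⟩, ⟨ha, hcond⟩, rfl⟩
      constructor
      · rw [DCoset_one]
        exact (mem_Pgrp_one r _).mpr ⟨a, h, ha, rfl⟩
      · rw [trace_Mel]; exact hcond
  rw [nBeta, hfil, Finset.card_image_of_injective _ (Mel_inj r), Finset.card_product,
    card_roots r hr β]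
  congr 1
  rw [Finset.card_univ, ← Nat.card_eq_fintype_card, card_Fq r hr]

end Aux2

/-- For `q = 2^r`: for each odd `n ≥ 3`, `n(β) > 0` for every `β`; and for `n = 1`,
`n(β) = q` if `β = 1`, `n(β) = 2q` if `β ≠ 1` and `tr((β-1)⁻¹) = 0`, and `n(β) = 0`
if `β ≠ 1` and `tr((β-1)⁻¹) = 1`. -/
theorem stmt_4 (r : ℕ) (hr : 1 ≤ r) :
    (∀ n : ℕ, Odd n → 3 ≤ n → ∀ β : Fq r, 0 < nBeta r n β) ∧
    (∀ β : Fq r, nBeta r 1 β =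
      if β = 1 then 2 ^ r
      else if tr2 r (β - 1)⁻¹ = 0 then 2 * 2 ^ r
      else 0) := by
  constructor
  · intro n hodd hn3 β
    exact part1 r hn3 β
  · intro β
    rw [nBeta_one r hr β]
    by_cases hβ : β = 1
    · simp [hβ]
    · rw [if_neg hβ, if_neg hβ]
      by_cases htr : tr2 r (β - 1)⁻¹ = 0 <;> simp [htr]
end
end

section
/- Let $q=2^r$ with $r\geq 1$, let $\lambda$ be the canonical additive character of $\mathbb{F}_q$, and let $\beta\in\mathbb{F}_q^*$. Then $\sum_{\alpha\in\mathbb{F}_q\setminus\{0,1\}}\lambda\big(\beta/(\alpha^2+\alpha)\big) = K(\lambda;\beta)-1$. -/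
open scoped BigOperators Classical
open Matrix

noncomputable section

/-- The canonical additive character `λ(x) = (-1)^{tr x}`, with values in `ℤ`. -/
noncomputable def lam (r : ℕ) (x : Fq r) : ℤ := if tr2 r x = 0 then 1 else -1

/-- The Kloosterman sum `K(λ; a) = ∑_{α ≠ 0} λ(α + a α⁻¹)`. -/
noncomputable def Kl (r : ℕ) (a : Fq r) : ℤ :=
  ∑ α ∈ Finset.univ.filter (fun α : Fq r => α ≠ 0), lam r (α + a * α⁻¹)

namespace Aux13

variable (r : ℕ)

lemma tr2_add (x y : Fq r) : tr2 r (x + y) = tr2 r x + tr2 r y :=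
  map_add (Algebra.trace (ZMod 2) (Fq r)) x y

lemma tr2_zero : tr2 r 0 = 0 := map_zero (Algebra.trace (ZMod 2) (Fq r))

theorem tr2_sq (x : Fq r) : tr2 r (x ^ 2) = tr2 r x := by
  let e : Fq r ≃ₐ[ZMod 2] Fq r := AlgEquiv.ofRingEquiv (f := frobeniusEquiv (Fq r) 2)
    (fun c => by show (algebraMap (ZMod 2) (Fq r) c) ^ 2 = _; rw [← map_pow, ZMod.pow_card])
  have h := Algebra.trace_eq_of_algEquiv e x
  have he : e x = x ^ 2 := by
    show frobeniusEquiv (Fq r) 2 x = x ^ 2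
    simp [frobeniusEquiv_apply, frobenius_def]
  rw [← he]; exact h

lemma lam_add (x y : Fq r) : lam r (x + y) = lam r x * lam r y := by
  unfold lam
  rw [tr2_add]
  have : ∀ a b : ZMod 2, (if a + b = 0 then (1:ℤ) else -1)
      = (if a = 0 then (1:ℤ) else -1) * (if b = 0 then (1:ℤ) else -1) := by decide
  exact this _ _

lemma tr2_psi (x : Fq r) : tr2 r (x ^ 2 + x) = 0 := by
  rw [tr2_add, tr2_sq]
  have : ∀ a : ZMod 2, a + a = 0 := by decide
  exact this _

/-- the Artin–Schreier map -/
def ψ (x : Fq r) : Fq r := x ^ 2 + x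

lemma char2 : CharP (Fq r) 2 := inferInstance

lemma add_self (x : Fq r) : x + x = 0 := by
  haveI := char2 r; exact CharTwo.add_self_eq_zero x

lemma add_eq_zero {x y : Fq r} : x + y = 0 ↔ x = y := by
  haveI := char2 r
  rw [CharTwo.add_eq_iff_eq_add, zero_add]

lemma psi_fiber (γ α₀ : Fq r) (h : ψ r α₀ = γ) :
    Finset.univ.filter (fun x : Fq r => ψ r x = γ) = {α₀, α₀ + 1} := by
  haveI := char2 r
  ext x
  simp only [Finset.mem_filter, Finset.mem_univ, true_and, Finset.mem_insert,
    Finset.mem_singleton]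
  constructor
  · intro hx
    have h0 : (x + α₀) ^ 2 + (x + α₀) = 0 := by
      rw [CharTwo.add_sq]
      have : x ^ 2 + x = α₀ ^ 2 + α₀ := by
        rw [show x ^ 2 + x = ψ r x from rfl, show α₀ ^ 2 + α₀ = ψ r α₀ from rfl, hx, h]
      calc x ^ 2 + α₀ ^ 2 + (x + α₀) = (x ^ 2 + x) + (α₀ ^ 2 + α₀) := by ring
        _ = 0 := by rw [this, add_self]
    have h1 : (x + α₀) * ((x + α₀) + 1) = 0 := by
      calc (x + α₀) * ((x + α₀) + 1) = (x + α₀) ^ 2 + (x + α₀) := by ring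
        _ = 0 := h0
    rcases mul_eq_zero.mp h1 with h2 | h2
    · left; have := (add_eq_zero r).mp h2; exact this
    · right
      have : x + α₀ = 1 := by
        have := (add_eq_zero r (x := x + α₀) (y := 1)).mp h2; exact this
      calc x = x + (α₀ + α₀) := by rw [add_self, add_zero]
        _ = (x + α₀) + α₀ := by ring
        _ = α₀ + 1 := by rw [this]; ring
  · rintro (rfl | rfl)
    · exact h
    · rw [← h]
      show (α₀ + 1) ^ 2 + (α₀ + 1) = α₀ ^ 2 + α₀
      rw [CharTwo.add_sq, one_pow]
      calc α₀ ^ 2 + 1 + (α₀ + 1) = α₀ ^ 2 + α₀ + (1 + 1) := by ring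
        _ = α₀ ^ 2 + α₀ := by rw [add_self, add_zero]

lemma self_ne_add_one (α : Fq r) : α ≠ α + 1 := by
  intro h
  have h2 : α + α = α + (α + 1) := congrArg (α + ·) h
  rw [add_self, ← add_assoc, add_self, zero_add] at h2
  exact zero_ne_one h2

lemma psi_fiber_card (γ α₀ : Fq r) (h : ψ r α₀ = γ) :
    (Finset.univ.filter (fun x : Fq r => ψ r x = γ)).card = 2 := by
  rw [psi_fiber r γ α₀ h]
  rw [Finset.card_pair (self_ne_add_one r α₀)]

/-- The trace-zero set. -/
def V : Finset (Fq r) := Finset.univ.filter (fun x => tr2 r x = 0)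

def K1 : Finset (Fq r) := Finset.univ.filter (fun x => tr2 r x = 1)

lemma card_V_eq_card_K1 (hr : 1 ≤ r) : (V r).card = (K1 r).card := by
  obtain ⟨c, hc⟩ := Algebra.trace_surjective (ZMod 2) (Fq r) 1
  have hc' : tr2 r c = 1 := hc
  apply Finset.card_bij' (fun x _ => x + c) (fun x _ => x + c)
  · intro a ha
    simp only [V, K1, Finset.mem_filter, Finset.mem_univ, true_and] at *
    rw [tr2_add, ha, hc', zero_add]
  · intro a ha
    simp only [V, K1, Finset.mem_filter, Finset.mem_univ, true_and] at *
    rw [tr2_add, ha, hc']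
    decide
  · intro a _; rw [add_assoc, add_self, add_zero]
  · intro a _; rw [add_assoc, add_self, add_zero]

lemma card_V_add_card_K1 : (V r).card + (K1 r).card = Fintype.card (Fq r) := by
  have : K1 r = Finset.univ.filter (fun x => ¬ tr2 r x = 0) := by
    ext x
    simp only [K1, Finset.mem_filter, Finset.mem_univ, true_and]
    have : ∀ a : ZMod 2, a = 1 ↔ ¬ a = 0 := by decide
    exact this _
  rw [this]
  have h := Finset.card_filter_add_card_filter_not
    (s := (Finset.univ : Finset (Fq r))) (p := fun x => tr2 r x = 0)
  rw [Finset.card_univ] at h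
  simpa [V] using h

lemma image_psi_subset : Finset.univ.image (ψ r) ⊆ V r := by
  intro γ hγ
  obtain ⟨x, _, rfl⟩ := Finset.mem_image.mp hγ
  simp only [V, Finset.mem_filter, Finset.mem_univ, true_and]
  exact tr2_psi r x

lemma two_mul_card_image : 2 * (Finset.univ.image (ψ r)).card = Fintype.card (Fq r) := by
  have h := Finset.card_eq_sum_card_image (ψ r) (Finset.univ : Finset (Fq r))
  rw [Finset.card_univ] at h
  rw [h, Finset.sum_congr rfl (fun γ hγ => ?_), Finset.sum_const, smul_eq_mul, mul_comm]
  obtain ⟨α₀, _, hα₀⟩ := Finset.mem_image.mp hγ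
  exact psi_fiber_card r γ α₀ hα₀

lemma image_psi_eq_V (hr : 1 ≤ r) : Finset.univ.image (ψ r) = V r := by
  apply Finset.eq_of_subset_of_card_le (image_psi_subset r)
  have h1 := card_V_add_card_K1 r
  rw [← card_V_eq_card_K1 r hr] at h1
  have h2 := two_mul_card_image r
  omega

/-- the trace-zero nonzero set -/
def T0 : Finset (Fq r) := Finset.univ.filter (fun γ => γ ≠ 0 ∧ tr2 r γ = 0)

def S : Finset (Fq r) := Finset.univ.filter (fun α => α ≠ 0 ∧ α ≠ 1)

lemma psi_one : ψ r 1 = 0 := by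
  show (1:Fq r) ^ 2 + 1 = 0
  rw [one_pow]; exact add_self r 1

lemma psi_zero : ψ r 0 = 0 := by
  show (0:Fq r) ^ 2 + 0 = 0
  simp

lemma psi_ne_zero {α : Fq r} (h0 : α ≠ 0) (h1 : α ≠ 1) : ψ r α ≠ 0 := by
  have : ψ r α = α * (α + 1) := by show α ^ 2 + α = _; ring
  rw [this]
  apply mul_ne_zero h0
  intro h
  exact h1 ((add_eq_zero r).mp h)

lemma image_psi_S (hr : 1 ≤ r) : (S r).image (ψ r) = T0 r := by
  ext γ
  simp only [T0, Finset.mem_filter, Finset.mem_univ, true_and]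
  constructor
  · intro hγ
    obtain ⟨α, hα, rfl⟩ := Finset.mem_image.mp hγ
    simp only [S, Finset.mem_filter, Finset.mem_univ, true_and] at hα
    exact ⟨psi_ne_zero r hα.1 hα.2, tr2_psi r α⟩
  · rintro ⟨hne, htr⟩
    have : γ ∈ V r := by
      simp only [V, Finset.mem_filter, Finset.mem_univ, true_and]; exact htr
    rw [← image_psi_eq_V r hr] at this
    obtain ⟨α, _, rfl⟩ := Finset.mem_image.mp this
    have h0 : α ≠ 0 := fun h => hne (by rw [h, psi_zero])
    have h1 : α ≠ 1 := fun h => hne (by rw [h, psi_one])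
    exact Finset.mem_image.mpr ⟨α, by simp [S, h0, h1], rfl⟩

lemma S_fiber_card (γ : Fq r) (hγ : γ ∈ T0 r) (hr : 1 ≤ r) :
    ((S r).filter (fun x => ψ r x = γ)).card = 2 := by
  have hne : γ ≠ 0 := by
    simp only [T0, Finset.mem_filter, Finset.mem_univ, true_and] at hγ; exact hγ.1
  have : (S r).filter (fun x => ψ r x = γ)
      = Finset.univ.filter (fun x : Fq r => ψ r x = γ) := by
    ext x
    simp only [S, Finset.mem_filter, Finset.mem_univ, true_and, and_imp]
    constructor
    · rintro ⟨_, h⟩; exact h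
    · intro h
      refine ⟨⟨fun h0 => hne ?_, fun h1 => hne ?_⟩, h⟩
      · rw [← h, h0, psi_zero]
      · rw [← h, h1, psi_one]
  rw [this]
  rw [← image_psi_S r hr] at hγ
  obtain ⟨α₀, _, hα₀⟩ := Finset.mem_image.mp hγ
  exact psi_fiber_card r γ α₀ hα₀

lemma sum_lam_univ (hr : 1 ≤ r) : ∑ x : Fq r, lam r x = 0 := by
  rw [← Finset.sum_filter_add_sum_filter_not Finset.univ (fun x => tr2 r x = 0)]
  have h1 : ∀ x ∈ Finset.univ.filter (fun x : Fq r => tr2 r x = 0), lam r x = 1 := by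
    intro x hx
    simp only [Finset.mem_filter] at hx
    simp [lam, hx.2]
  have h2 : ∀ x ∈ Finset.univ.filter (fun x : Fq r => ¬ tr2 r x = 0), lam r x = -1 := by
    intro x hx
    simp only [Finset.mem_filter] at hx
    simp [lam, hx.2]
  rw [Finset.sum_congr rfl h1, Finset.sum_congr rfl h2]
  rw [Finset.sum_const, Finset.sum_const]
  have hK : Finset.univ.filter (fun x : Fq r => ¬ tr2 r x = 0) = K1 r := by
    ext x
    simp only [K1, Finset.mem_filter, Finset.mem_univ, true_and]
    have : ∀ a : ZMod 2, ¬ a = 0 ↔ a = 1 := by decide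
    exact this _
  rw [hK]
  have : Finset.univ.filter (fun x : Fq r => tr2 r x = 0) = V r := rfl
  rw [this, card_V_eq_card_K1 r hr]
  simp

end Aux13

/-- For `q = 2^r` and `β ∈ F_q^*`:
`∑_{α ∈ F_q \ {0,1}} λ(β/(α² + α)) = K(λ; β) - 1`. -/
theorem stmt_13 (r : ℕ) (hr : 1 ≤ r) (β : Fq r) (hβ : β ≠ 0) :
    ∑ α ∈ Finset.univ.filter (fun α : Fq r => α ≠ 0 ∧ α ≠ 1),
      lam r (β / (α ^ 2 + α)) = Kl r β - 1 := by
  classical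
  open Aux13 in
  -- notation
  set S0 : ℤ := ∑ γ ∈ T0 r, lam r (β * γ⁻¹) with hS0
  -- Step 1: LHS = 2 * S0
  have step1 : ∑ α ∈ Finset.univ.filter (fun α : Fq r => α ≠ 0 ∧ α ≠ 1),
      lam r (β / (α ^ 2 + α)) = 2 * S0 := by
    have hmaps : ∀ α ∈ S r, ψ r α ∈ T0 r := by
      intro α hα
      rw [← image_psi_S r hr]
      exact Finset.mem_image_of_mem _ hα
    have key := Finset.sum_fiberwise_of_maps_to' hmaps (fun γ => lam r (β * γ⁻¹))
    have lhs_eq : ∑ α ∈ Finset.univ.filter (fun α : Fq r => α ≠ 0 ∧ α ≠ 1),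
        lam r (β / (α ^ 2 + α)) = ∑ α ∈ S r, lam r (β * (ψ r α)⁻¹) := by
      apply Finset.sum_congr rfl
      intro α _
      rw [div_eq_mul_inv]
      rfl
    rw [lhs_eq, ← key, hS0, Finset.mul_sum]
    apply Finset.sum_congr rfl
    intro γ hγ
    rw [Finset.sum_const, S_fiber_card r γ hγ hr]
    push_cast
    ring
  -- Step 2: Kl r β = 2 * S0 + 1
  have step2 : Kl r β = 2 * S0 + 1 := by
    set N : Finset (Fq r) := Finset.univ.filter (fun α : Fq r => α ≠ 0) with hN
    have split : Kl r β = (∑ x ∈ N.filter (fun x => tr2 r x = 0), lam r (x + β * x⁻¹))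
        + ∑ x ∈ N.filter (fun x => ¬ tr2 r x = 0), lam r (x + β * x⁻¹) := by
      rw [Kl, ← Finset.sum_filter_add_sum_filter_not N (fun x => tr2 r x = 0)]
    have hNT0 : N.filter (fun x => tr2 r x = 0) = T0 r := by
      ext x
      simp only [hN, T0, Finset.filter_filter, Finset.mem_filter, Finset.mem_univ, true_and]
    have hNK1 : N.filter (fun x => ¬ tr2 r x = 0) = K1 r := by
      ext x
      simp only [hN, K1, Finset.filter_filter, Finset.mem_filter, Finset.mem_univ, true_and]
      have hz : ∀ a : ZMod 2, ¬ a = 0 ↔ a = 1 := by decide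
      constructor
      · rintro ⟨_, h⟩
        exact (hz _).mp h
      · intro h
        refine ⟨fun h0 => ?_, (hz _).mpr h⟩
        rw [h0, tr2_zero] at h
        exact absurd h (by decide)
    have hA : ∑ x ∈ N.filter (fun x => tr2 r x = 0), lam r (x + β * x⁻¹) = S0 := by
      rw [hNT0, hS0]
      apply Finset.sum_congr rfl
      intro x hx
      simp only [T0, Finset.mem_filter, Finset.mem_univ, true_and] at hx
      rw [lam_add r, show lam r x = 1 from by simp [lam, hx.2], one_mul]
    have hB : ∑ x ∈ N.filter (fun x => ¬ tr2 r x = 0), lam r (x + β * x⁻¹)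
        = - ∑ x ∈ K1 r, lam r (β * x⁻¹) := by
      rw [hNK1, ← Finset.sum_neg_distrib]
      apply Finset.sum_congr rfl
      intro x hx
      simp only [K1, Finset.mem_filter, Finset.mem_univ, true_and] at hx
      rw [lam_add r, show lam r x = -1 from by simp [lam, hx], neg_one_mul]
    -- A + B' = -1 where B' = ∑_{K1} lam (β x⁻¹)
    have hsum : S0 + ∑ x ∈ K1 r, lam r (β * x⁻¹) = -1 := by
      have e1 : S0 + ∑ x ∈ K1 r, lam r (β * x⁻¹) = ∑ x ∈ N, lam r (β * x⁻¹) := by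
        rw [hS0, ← hNT0, ← hNK1,
          Finset.sum_filter_add_sum_filter_not N (fun x => tr2 r x = 0)]
      have e2 : ∑ x ∈ N, lam r (β * x⁻¹) = ∑ x ∈ N, lam r x := by
        refine Finset.sum_nbij' (fun x => β * x⁻¹) (fun x => β * x⁻¹) ?_ ?_ ?_ ?_ ?_
        · intro a ha
          simp only [hN, Finset.mem_filter, Finset.mem_univ, true_and] at ha ⊢
          exact mul_ne_zero hβ (inv_ne_zero ha)
        · intro a ha
          simp only [hN, Finset.mem_filter, Finset.mem_univ, true_and] at ha ⊢
          exact mul_ne_zero hβ (inv_ne_zero ha)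
        · intro a ha
          simp only [hN, Finset.mem_filter, Finset.mem_univ, true_and] at ha
          field_simp
        · intro a ha
          simp only [hN, Finset.mem_filter, Finset.mem_univ, true_and] at ha
          field_simp
        · intro a _; rfl
      have e3 : ∑ x ∈ N, lam r x = -1 := by
        have : ∑ x : Fq r, lam r x = ∑ x ∈ N, lam r x + lam r 0 := by
          rw [hN, ← Finset.sum_filter_add_sum_filter_not Finset.univ (fun x : Fq r => x ≠ 0)]
          congr 1
          have : Finset.univ.filter (fun x : Fq r => ¬ x ≠ 0) = {0} := by
            ext x; simp
          rw [this, Finset.sum_singleton]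
        have h0 : lam r 0 = 1 := by simp [lam, tr2_zero]
        have hu := sum_lam_univ r hr
        rw [this, h0] at hu
        omega
      rw [e1, e2, e3]
    rw [split, hA, hB]
    omega
  rw [step1, step2]
  ring
end
end
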